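/- Let φ: S^n → S^n be an isometry of the round sphere (with respect to some Riemannian metric g on S^n for which the antipodal map is an isometry, φ being an isometry from (S^n, g) to the standard round sphere). Then φ commutes with the antipodal map: φ(-p) = -φ(p) for all p ∈ S^n. -/

import Mathlib

/- STATEMENT 0: If g is a Riemannian metric on Sⁿ for which the antipodal map is an
isometry, and φ : (Sⁿ, g) → (Sⁿ, σ̃) is an isometry onto the standard round sphere
(encoded via the round distance `distRound`, so that g has constant curvature 1 by
Cartan), then φ commutes with the antipodal map.  The metric g is encoded by its
distance function `dg`. -/

open Metric
noncomputable section

abbrev Sph (n : ℕ) := Metric.sphere (0 : EuclideanSpace ℝ (Fin (n + 1))) 1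

/-- The intrinsic (round) distance on the standard unit sphere. -/
def distRound (n : ℕ) (p q : Sph n) : ℝ :=
  Real.arccos (inner ℝ (p : EuclideanSpace ℝ (Fin (n + 1))) (q : EuclideanSpace ℝ (Fin (n + 1))))

theorem stmt_0 (n : ℕ) (dg : Sph n → Sph n → ℝ) (φ : Sph n ≃ Sph n)
    (hanti : ∀ p q : Sph n, dg (-p) (-q) = dg p q)
    (hφ : ∀ p q : Sph n, distRound n (φ p) (φ q) = dg p q) :
    ∀ p : Sph n, φ (-p) = -φ p := by
  set E := EuclideanSpace ℝ (Fin (n + 1))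
  have hnorm : ∀ x : Sph n, ‖(x : E)‖ = 1 := fun x => by
    simpa using mem_sphere_zero_iff_norm.mp x.2
  -- inner product of two unit vectors lies in [-1, 1]
  have hbnd : ∀ x y : Sph n, |inner ℝ (x : E) (y : E)| ≤ (1 : ℝ) := fun x y => by
    have := abs_real_inner_le_norm (x : E) (y : E)
    simpa [hnorm x, hnorm y] using this
  -- distRound equality implies inner product equality
  have hinner_of_dist : ∀ x y z w : Sph n, distRound n x y = distRound n z w →
      (inner ℝ (x : E) (y : E) : ℝ) = inner ℝ (z : E) (w : E) := by
    intro x y z w h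
    have h1 := abs_le.mp (hbnd x y)
    have h2 := abs_le.mp (hbnd z w)
    exact Real.arccos_injOn ⟨h1.1, h1.2⟩ ⟨h2.1, h2.2⟩ h
  -- the conjugated antipodal map
  set ψ : Sph n → Sph n := fun x => φ (-(φ.symm x)) with hψdef
  -- ψ preserves inner products
  have hpres : ∀ x y : Sph n, (inner ℝ (ψ x : E) (ψ y : E) : ℝ) = inner ℝ (x : E) (y : E) := by
    intro x y
    apply hinner_of_dist
    show distRound n (φ (-(φ.symm x))) (φ (-(φ.symm y))) = distRound n x y
    rw [hφ, hanti, ← hφ, φ.apply_symm_apply, φ.apply_symm_apply]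
  -- ψ is an involution
  have hinv : ∀ x : Sph n, ψ (ψ x) = x := by
    intro x
    show φ (-(φ.symm (φ (-(φ.symm x))))) = x
    rw [φ.symm_apply_apply, neg_neg, φ.apply_symm_apply]
  -- ψ has no fixed points
  have hnofix : ∀ x : Sph n, ψ x ≠ x := by
    intro x hx
    have h1 : -(φ.symm x) = φ.symm x := by
      have := congrArg φ.symm hx
      rwa [φ.symm_apply_apply] at this
    have h2 : (-(φ.symm x) : E) = (φ.symm x : E) := by
      rw [← coe_neg_sphere, h1]
    have h3 : (φ.symm x : E) = 0 := by
      have : (2 : ℝ) • (φ.symm x : E) = 0 := by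
        rw [two_smul]
        nth_rewrite 1 [← h2]
        simp
      simpa [smul_eq_zero] using this
    have := hnorm (φ.symm x)
    rw [h3] at this
    simp at this
  -- main claim: ψ x = -x for every x
  have hmain : ∀ x : Sph n, ψ x = -x := by
    intro x
    by_contra hne
    -- so (x : E) + (ψ x : E) ≠ 0
    have hv : (x : E) + (ψ x : E) ≠ 0 := by
      intro h0
      apply hne
      apply Subtype.ext
      rw [coe_neg_sphere]
      linear_combination (norm := abel) h0
    set v : E := (x : E) + (ψ x : E) with hvdef
    have hs : ‖v‖ ≠ 0 := norm_ne_zero_iff.mpr hv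
    have hu_mem : (‖v‖⁻¹ • v) ∈ sphere (0 : E) 1 := by
      rw [mem_sphere_zero_iff_norm, norm_smul, norm_inv, norm_norm,
        inv_mul_cancel₀ hs]
    set u : Sph n := ⟨‖v‖⁻¹ • v, hu_mem⟩ with hudef
    have hucoe : (u : E) = ‖v‖⁻¹ • v := rfl
    -- ⟪ψ u, x⟫ = ⟪u, ψ x⟫ : apply hpres with y := ψ x and use involution
    have key1 : (inner ℝ (ψ u : E) (x : E) : ℝ) = inner ℝ (u : E) (ψ x : E) := by
      have := hpres u (ψ x)
      rwa [hinv x] at this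
    have key2 : (inner ℝ (ψ u : E) (ψ x : E) : ℝ) = inner ℝ (u : E) (x : E) := hpres u x
    -- inner ℝ (ψ u) u = 1
    have hinner1 : (inner ℝ (ψ u : E) (u : E) : ℝ) = 1 := by
      have hvv : (inner ℝ v v : ℝ) = ‖v‖ * ‖v‖ := real_inner_self_eq_norm_mul_norm v
      have e1 : (inner ℝ (ψ u : E) (u : E) : ℝ) = ‖v‖⁻¹ * (inner ℝ (ψ u : E) v) := by
        rw [hucoe, real_inner_smul_right]
      have e2 : (inner ℝ (ψ u : E) v : ℝ) = inner ℝ (ψ u : E) (x : E) + inner ℝ (ψ u : E) (ψ x : E) := by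
        rw [hvdef, inner_add_right]
      have e3 : (inner ℝ (u : E) v : ℝ) = inner ℝ (u : E) (x : E) + inner ℝ (u : E) (ψ x : E) := by
        rw [hvdef, inner_add_right]
      have e4 : (inner ℝ (u : E) v : ℝ) = ‖v‖⁻¹ * (inner ℝ v v) := by
        rw [hucoe, real_inner_smul_left]
      have e5 : (inner ℝ (ψ u : E) v : ℝ) = inner ℝ (u : E) v := by
        rw [e2, e3, key1, key2]; ring
      rw [e1, e5, e4, hvv, ← mul_assoc]
      field_simp
    -- hence ψ u = u, contradicting no fixed points
    have : ψ u = u := by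
      apply Subtype.ext
      exact (inner_eq_one_iff_of_norm_eq_one (hnorm (ψ u)) (hnorm u)).mp (by exact_mod_cast hinner1)
    exact hnofix u this
  intro p
  have := hmain (φ p)
  have h2 : ψ (φ p) = φ (-p) := by
    show φ (-(φ.symm (φ p))) = φ (-p)
    rw [φ.symm_apply_apply]
  rw [← h2]
  exact this
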